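/- Let f : ℝ → ℝ be continuous and Q ⊆ ℝ compact. For fixed 0 < 𝔘 < β, the union of all safe sets contained in Q is the unique maximal safe set, and it is compact. -/
import Mathlib


/-- The closed `u`-thickening of a set `X ⊆ ℝ`. -/
def thick (X : Set ℝ) (u : ℝ) : Set ℝ := {y : ℝ | ∃ x ∈ X, |y - x| ≤ u}

/-- `S` is a safe set in `Q` for control bound `𝔘` and disturbance bound `β`. -/
def SafeSet (f : ℝ → ℝ) (Q : Set ℝ) (𝔘 β : ℝ) (S : Set ℝ) : Prop :=
  S ⊆ Q ∧ thick (f '' S) β ⊆ thick S 𝔘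

lemma thick_mono {X Y : Set ℝ} (h : X ⊆ Y) (u : ℝ) : thick X u ⊆ thick Y u := by
  rintro y ⟨x, hx, hxy⟩; exact ⟨x, h hx, hxy⟩

lemma thick_compact {X : Set ℝ} (hX : IsCompact X) (u : ℝ) : IsCompact (thick X u) := by
  have heq : thick X u = (fun p : ℝ × ℝ => p.1 + p.2) '' (X ×ˢ Metric.closedBall 0 u) := by
    ext y
    constructor
    · rintro ⟨x, hx, h⟩
      exact ⟨(x, y - x), ⟨hx, by simpa [Real.dist_eq] using h⟩, by ring⟩
    · rintro ⟨⟨x, d⟩, ⟨hx, hd⟩, rfl⟩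
      exact ⟨x, hx, by simpa [Real.dist_eq] using Metric.mem_closedBall.mp hd⟩
  rw [heq]
  exact (hX.prod (isCompact_closedBall 0 u)).image (continuous_fst.add continuous_snd)

theorem maximal_safe_set (f : ℝ → ℝ) (Q : Set ℝ) (𝔘 β : ℝ)
    (hf : Continuous f) (hQ : IsCompact Q) (h𝔘 : 0 < 𝔘) (h𝔘β : 𝔘 < β) :
    SafeSet f Q 𝔘 β (⋃₀ {S | SafeSet f Q 𝔘 β S}) ∧
    (∀ S, SafeSet f Q 𝔘 β S → S ⊆ ⋃₀ {S | SafeSet f Q 𝔘 β S}) ∧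
    IsCompact (⋃₀ {S | SafeSet f Q 𝔘 β S}) := by
  set U := ⋃₀ {S | SafeSet f Q 𝔘 β S} with hUdef
  have hUsafe : SafeSet f Q 𝔘 β U := by
    constructor
    · rintro x ⟨S, hS, hx⟩; exact hS.1 hx
    · rintro y ⟨z, ⟨x, ⟨S, hS, hxS⟩, rfl⟩, hyz⟩
      obtain ⟨s, hs, h⟩ := hS.2 ⟨f x, ⟨x, hxS, rfl⟩, hyz⟩
      exact ⟨s, ⟨S, hS, hs⟩, h⟩
  refine ⟨hUsafe, fun S hS => Set.subset_sUnion_of_mem hS, ?_⟩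
  set M := closure U with hMdef
  have hMQ : M ⊆ Q := closure_minimal hUsafe.1 hQ.isClosed
  have hMcomp : IsCompact M := hQ.of_isClosed_subset isClosed_closure hMQ
  have hthick : IsClosed (thick M 𝔘) := (thick_compact hMcomp 𝔘).isClosed
  have hMsafe : SafeSet f Q 𝔘 β M := by
    refine ⟨hMQ, ?_⟩
    rintro y ⟨z, ⟨x, hxM, rfl⟩, hyz⟩
    obtain ⟨w, hw, hwx⟩ := mem_closure_iff_seq_limit.mp hxM
    have hfw : Filter.Tendsto (fun n => f (w n)) Filter.atTop (nhds (f x)) :=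
      ((hf.tendsto x).comp hwx)
    have htend : Filter.Tendsto (fun n => y - f x + f (w n)) Filter.atTop (nhds y) := by
      have := (tendsto_const_nhds (x := y - f x) (f := Filter.atTop (α := ℕ))).add hfw
      simpa using this
    refine hthick.mem_of_tendsto htend ?_
    filter_upwards with n
    have hmem : (y - f x + f (w n)) ∈ thick U 𝔘 :=
      hUsafe.2 ⟨f (w n), ⟨w n, hw n, rfl⟩, by simpa using hyz⟩
    exact thick_mono subset_closure 𝔘 hmem
  have hUM : U = M := Set.Subset.antisymm subset_closure (Set.subset_sUnion_of_mem hMsafe)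
  rw [hUM]; exact hMcomp
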